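/- Pretrained conformal coverage lower bound: let Z ∈ Z^{n+1} be a time series, s : Z^{L+1} → ℝ a fixed score function with memory L (0 ≤ L ≤ n), and define S_i = s(Z_i; Z_{i-1},...,Z_{i-L}) for i = L+1,...,n+1 and S = (S_{L+1},...,S_{n+1}). Then P(S_{n+1} ≤ Quantile_{(1-α)(1+1/(n-L))}(S_{L+1},...,S_n)) ≥ 1 − α − min_{τ ∈ {0,...,n-L}} { τ/(n-L+1) + Ψ̄_τ(S) }. -/

import Mathlib

open MeasureTheory
open scoped ENNReal

/-- The `j`-th order statistic (1-indexed) of a finite real vector. -/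
noncomputable def orderStat {m : ℕ} (v : Fin m → ℝ) (j : ℕ) : ℝ :=
  ((List.ofFn v).mergeSort (fun x y => x ≤ y)).getD (j - 1) 0

/-- `Quantile b v` is the `⌈b·m⌉`-th order statistic of `v ∈ ℝ^m`, with the conventions
`Quantile b v = ⊤` if `b > 1` and `Quantile b v = ⊥` if `b ≤ 0`. -/
noncomputable def Quantile {m : ℕ} (b : ℝ) (v : Fin m → ℝ) : EReal :=
  if b > 1 then ⊤ else if b ≤ 0 then ⊥ else ((orderStat v ⌈b * m⌉.toNat : ℝ) : EReal)

/-- The deletion operator `Δ⁰_{k,τ}` of the paper (with `k` and `τ` counts of entries). -/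
def delta0 {α : Type*} (m k τ : ℕ) (w : Fin m → α) : Fin (m - τ) → α :=
  fun i =>
    if i.val < m - τ - k then w ⟨i.val, by have := i.isLt; omega⟩
    else w ⟨i.val + τ, by have := i.isLt; omega⟩

/-- The deletion operator `Δ¹_{k,τ}` of the paper. -/
def delta1 {α : Type*} (m k τ : ℕ) (w : Fin m → α) : Fin (m - τ) → α :=
  fun i =>
    if h : k + τ < m then
      if h2 : i.val < m - τ - k then w ⟨i.val + k + τ, by have := i.isLt; omega⟩
      else w ⟨i.val - (m - τ - k), by have := i.isLt; omega⟩
    else w ⟨(i.val + k + τ - m) % m, Nat.mod_lt _ (by have := i.isLt; omega)⟩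

/-- Total variation distance between the laws of two random elements `U, V` under `P`. -/
noncomputable def dTV {Ω γ : Type*} [MeasurableSpace Ω] [MeasurableSpace γ]
    (P : Measure Ω) (U V : Ω → γ) : ℝ :=
  ⨆ E : {E : Set γ // MeasurableSet E}, |(P (U ⁻¹' E.1)).toReal - (P (V ⁻¹' E.1)).toReal|

/-- The switch coefficient `Ψ_{k,τ}(W)` of a random vector `W` of length `m`. -/
noncomputable def switchCoef {Ω α : Type*} [MeasurableSpace Ω] [MeasurableSpace α]
    (P : Measure Ω) {m : ℕ} (W : Ω → Fin m → α) (k τ : ℕ) : ℝ :=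
  dTV P (fun ω => delta0 m k τ (W ω)) (fun ω => delta1 m k τ (W ω))

/-- The averaged switch coefficient `Ψ̄_τ(W) = (1/m) ∑_{k=1}^m Ψ_{k,τ}(W)`. -/
noncomputable def avgSwitchCoef {Ω α : Type*} [MeasurableSpace Ω] [MeasurableSpace α]
    (P : Measure Ω) {m : ℕ} (W : Ω → Fin m → α) (τ : ℕ) : ℝ :=
  (∑ k ∈ Finset.Icc 1 m, switchCoef P W k τ) / m

/-- Stationarity of a time series `Z = (Z_1,…,Z_{n+1})`. -/
def Stationary {Ω α : Type*} [MeasurableSpace Ω] [MeasurableSpace α]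
    (P : Measure Ω) {n : ℕ} (Z : Ω → Fin (n + 1) → α) : Prop :=
  ∀ (ℓ i : ℕ) (h : i + ℓ ≤ n + 1),
    Measure.map (fun ω (j : Fin ℓ) => Z ω ⟨i + j.val, by have := j.isLt; omega⟩) P =
      Measure.map (fun ω (j : Fin ℓ) => Z ω ⟨j.val, by have := j.isLt; omega⟩) P

/-- Exchangeability of a random vector. -/
def Exchangeable {Ω α : Type*} [MeasurableSpace Ω] [MeasurableSpace α]
    (P : Measure Ω) {n : ℕ} (Z : Ω → Fin (n + 1) → α) : Prop :=
  ∀ σ : Equiv.Perm (Fin (n + 1)),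
    Measure.map (fun ω => Z ω ∘ σ) P = Measure.map Z P

/-- The β-mixing coefficient with lag `τ` of `Z`, defined via an independent copy `Z'`. -/
noncomputable def betaMix {Ω α : Type*} [MeasurableSpace Ω] [MeasurableSpace α]
    (P : Measure Ω) (n : ℕ) (Z Z' : Ω → Fin (n + 1) → α) (τ : ℕ) : ℝ :=
  ⨆ k : Fin (n - τ),
    dTV P
      (fun ω (i : Fin (n + 1 - τ)) =>
        if i.val < k.val + 1 then Z ω ⟨i.val, by have := i.isLt; omega⟩
        else Z ω ⟨i.val + τ, by have := i.isLt; omega⟩)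
      (fun ω (i : Fin (n + 1 - τ)) =>
        if i.val < k.val + 1 then Z ω ⟨i.val, by have := i.isLt; omega⟩
        else Z' ω ⟨i.val + τ, by have := i.isLt; omega⟩)

open MeasureTheory Finset
open scoped ENNReal
section AUX4
open Finset

-- count along injection
lemma card_filter_comp_le {M m : ℕ} (φ : Fin M → Fin m) (hφ : Function.Injective φ)
    (p : Fin m → Prop) [DecidablePred p] :
    (univ.filter fun i => p (φ i)).card ≤ (univ.filter p).card :=
  Finset.card_le_card_of_injOn φ (by intro a ha; simp at *; exact ha) (hφ.injOn)

-- deletion count bound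
lemma card_filter_le_comp_add {M m : ℕ} (hMm : M ≤ m) (φ : Fin M → Fin m)
    (hφ : Function.Injective φ) (p : Fin m → Prop) [DecidablePred p] :
    (univ.filter p).card ≤ (univ.filter fun i => p (φ i)).card + (m - M) := by
  classical
  set R : Finset (Fin m) := Finset.image φ univ with hR
  have hcardR : R.card = M := by
    rw [hR, Finset.card_image_of_injective _ hφ]; simp
  have h1 : (univ.filter p).card = ((univ.filter p) ∩ R).card + ((univ.filter p) \ R).card :=
    (Finset.card_inter_add_card_sdiff _ _).symm
  have h2 : ((univ.filter p) ∩ R).card ≤ (univ.filter fun i => p (φ i)).card := by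
    have : (univ.filter p) ∩ R ⊆ Finset.image φ (univ.filter fun i => p (φ i)) := by
      intro j hj
      simp only [Finset.mem_inter, Finset.mem_filter, hR, Finset.mem_image] at hj ⊢
      obtain ⟨⟨-, hpj⟩, i, -, rfl⟩ := hj
      exact ⟨i, by simp [hpj]⟩
    calc ((univ.filter p) ∩ R).card ≤ _ := Finset.card_le_card this
      _ ≤ (univ.filter fun i => p (φ i)).card := Finset.card_image_le
  have h3 : ((univ.filter p) \ R).card ≤ m - M := by
    have : (univ.filter p) \ R ⊆ univ \ R := by
      exact Finset.sdiff_subset_sdiff (Finset.filter_subset _ _) le_rfl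
    calc ((univ.filter p) \ R).card ≤ (univ \ R).card := Finset.card_le_card this
      _ = m - M := by rw [Finset.card_sdiff_of_subset (Finset.subset_univ _), hcardR]; simp
  omega

-- rank counting lemma
lemma rank_count {m : ℕ} (w : Fin m → ℝ) (t : ℕ) (htm : t ≤ m) :
    (univ.filter fun j => t ≤ (univ.filter fun j' => w j' < w j).card).card + t ≤ m := by
  classical
  set A := univ.filter fun j => t ≤ (univ.filter fun j' => w j' < w j).card with hA
  rcases A.eq_empty_or_nonempty with h | h
  · rw [h]; simpa using htm
  · obtain ⟨j₀, hj₀A, hmin⟩ := Finset.exists_min_image A w h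
    set B := univ.filter fun j' => w j' < w j₀ with hB
    have hdisj : Disjoint A B := by
      rw [Finset.disjoint_left]
      intro j hjA hjB
      rw [hB, Finset.mem_filter] at hjB
      exact absurd hjB.2 (not_lt.mpr (hmin j hjA))
    have htB : t ≤ B.card := by
      rw [hA, Finset.mem_filter] at hj₀A; exact hj₀A.2
    calc A.card + t ≤ A.card + B.card := by omega
      _ = (A ∪ B).card := (Finset.card_union_of_disjoint hdisj).symm
      _ ≤ (univ : Finset (Fin m)).card := Finset.card_le_card (Finset.subset_univ _)
      _ = m := by simp

end AUX4
open Finset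



def phi0 (m k τ : ℕ) (i : Fin (m - τ)) : Fin m :=
  if i.val < m - τ - k then ⟨i.val, by have := i.isLt; omega⟩
  else ⟨i.val + τ, by have := i.isLt; omega⟩

def phi1 (m k τ : ℕ) (i : Fin (m - τ)) : Fin m :=
  if h : k + τ < m then
    if h2 : i.val < m - τ - k then ⟨i.val + k + τ, by have := i.isLt; omega⟩
    else ⟨i.val - (m - τ - k), by have := i.isLt; omega⟩
  else ⟨(i.val + k + τ - m) % m, Nat.mod_lt _ (by have := i.isLt; omega)⟩

lemma delta0_eq {α : Type*} (m k τ : ℕ) (w : Fin m → α) (i : Fin (m - τ)) :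
    delta0 m k τ w i = w (phi0 m k τ i) := by
  unfold delta0 phi0; split_ifs <;> rfl

lemma delta1_eq {α : Type*} (m k τ : ℕ) (w : Fin m → α) (i : Fin (m - τ)) :
    delta1 m k τ w i = w (phi1 m k τ i) := by
  unfold delta1 phi1; split_ifs <;> rfl

lemma phi0_inj (m k τ : ℕ) : Function.Injective (phi0 m k τ) := by
  intro i1 i2 h
  unfold phi0 at h
  have h1 := i1.isLt; have h2 := i2.isLt
  apply Fin.ext
  split_ifs at h <;> (rw [Fin.mk.injEq] at h; omega)

lemma phi1_val (m k τ : ℕ) (hk : 1 ≤ k) (hkm : k ≤ m) (hτ : τ + 1 ≤ m) (i : Fin (m - τ)) :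
    (phi1 m k τ i).val = if k + τ < m then
      (if i.val < m - τ - k then i.val + k + τ else i.val - (m - τ - k))
    else i.val + (k + τ - m) := by
  have hi := i.isLt
  unfold phi1
  split_ifs with h h2
  · rfl
  · rfl
  · simp only
    rw [Nat.mod_eq_of_lt (by omega)]
    omega

lemma phi1_inj (m k τ : ℕ) (hk : 1 ≤ k) (hkm : k ≤ m) (hτ : τ + 1 ≤ m) :
    Function.Injective (phi1 m k τ) := by
  intro i1 i2 h
  have h1 := i1.isLt; have h2 := i2.isLt
  have hv : (phi1 m k τ i1).val = (phi1 m k τ i2).val := by rw [h]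
  rw [phi1_val m k τ hk hkm hτ, phi1_val m k τ hk hkm hτ] at hv
  apply Fin.ext
  split_ifs at hv <;> omega

lemma phi0_last (m k τ : ℕ) (hk : 1 ≤ k) (hτ : τ + 1 ≤ m) :
    (phi0 m k τ ⟨m - τ - 1, by omega⟩).val = m - 1 := by
  unfold phi0
  split_ifs with h
  · simp only [Fin.val_mk] at h ⊢; omega
  · simp only [Fin.val_mk]; omega

lemma phi1_last (m k τ : ℕ) (hk : 1 ≤ k) (hkm : k ≤ m) (hτ : τ + 1 ≤ m) :
    (phi1 m k τ ⟨m - τ - 1, by omega⟩).val = k - 1 := by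
  rw [phi1_val m k τ hk hkm hτ]
  simp only [Fin.val_mk]
  split_ifs with h h2 <;> omega
open MeasureTheory Finset
open scoped ENNReal


lemma dTV_nonneg {Ω γ : Type*} [MeasurableSpace Ω] [MeasurableSpace γ]
    (P : Measure Ω) (U V : Ω → γ) : 0 ≤ dTV P U V :=
  Real.iSup_nonneg (fun _ => abs_nonneg _)

lemma le_add_dTV {Ω γ : Type*} [MeasurableSpace Ω] [MeasurableSpace γ]
    (P : Measure Ω) [IsProbabilityMeasure P] (U V : Ω → γ) {E : Set γ} (hE : MeasurableSet E) :
    (P (U ⁻¹' E)).toReal ≤ (P (V ⁻¹' E)).toReal + dTV P U V := by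
  have hb : BddAbove (Set.range fun E : {E : Set γ // MeasurableSet E} =>
      |(P (U ⁻¹' E.1)).toReal - (P (V ⁻¹' E.1)).toReal|) := by
    refine ⟨2, ?_⟩
    rintro x ⟨F, rfl⟩
    have h1 : (P (U ⁻¹' F.1)).toReal ≤ 1 := by
      have := prob_le_one (μ := P) (s := U ⁻¹' F.1)
      exact ENNReal.toReal_le_of_le_ofReal one_pos.le (by simpa using this)
    have h2 : (P (V ⁻¹' F.1)).toReal ≤ 1 := by
      have := prob_le_one (μ := P) (s := V ⁻¹' F.1)
      exact ENNReal.toReal_le_of_le_ofReal one_pos.le (by simpa using this)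
    have h3 : (0:ℝ) ≤ (P (U ⁻¹' F.1)).toReal := ENNReal.toReal_nonneg
    have h4 : (0:ℝ) ≤ (P (V ⁻¹' F.1)).toReal := ENNReal.toReal_nonneg
    rw [abs_le]; constructor <;> linarith
  have := le_ciSup hb ⟨E, hE⟩
  have habs : (P (U ⁻¹' E)).toReal - (P (V ⁻¹' E)).toReal ≤
      |(P (U ⁻¹' E)).toReal - (P (V ⁻¹' E)).toReal| := le_abs_self _
  unfold dTV
  linarith

lemma measurable_countLT {M : ℕ} (j₀ : Fin M) :
    Measurable fun w : Fin M → ℝ => (univ.filter fun j => w j < w j₀).card := by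
  have : (fun w : Fin M → ℝ => (univ.filter fun j => w j < w j₀).card) =
      fun w => ∑ j : Fin M, if w j < w j₀ then 1 else 0 := by
    funext w; exact Finset.card_filter _ _
  rw [this]
  exact Finset.measurable_sum _ (fun j _ => Measurable.ite
    (measurableSet_lt (measurable_pi_apply j) (measurable_pi_apply j₀))
    measurable_const measurable_const)

-- union bound via counting: if pointwise at most C of the events hold, sum of probs ≤ C
open Classical in
lemma sum_prob_le {Ω : Type*} [MeasurableSpace Ω] (P : Measure Ω) [IsProbabilityMeasure P]
    {ι : Type*} (s : Finset ι) (F : ι → Set Ω) (hF : ∀ k ∈ s, MeasurableSet (F k)) (C : ℕ)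
    (hC : ∀ ω, (s.filter fun k => ω ∈ F k).card ≤ C) :
    ∑ k ∈ s, (P (F k)).toReal ≤ C := by
  classical
  have key : ∑ k ∈ s, P (F k) ≤ (C : ℝ≥0∞) := by
    have h1 : ∀ k ∈ s, P (F k) = ∫⁻ ω, (F k).indicator 1 ω ∂P :=
      fun k hk => (lintegral_indicator_one (hF k hk)).symm
    rw [Finset.sum_congr rfl h1, ← lintegral_finset_sum s
      (fun k hk => (measurable_one.indicator (hF k hk)))]
    calc ∫⁻ ω, ∑ k ∈ s, (F k).indicator 1 ω ∂P
        ≤ ∫⁻ _, (C : ℝ≥0∞) ∂P := by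
          apply lintegral_mono
          intro ω
          simp only
          have : ∑ k ∈ s, (F k).indicator (1 : Ω → ℝ≥0∞) ω =
              ((s.filter fun k => ω ∈ F k).card : ℝ≥0∞) := by
            rw [Finset.card_filter]
            push_cast
            apply Finset.sum_congr rfl
            intro k _
            by_cases h : ω ∈ F k <;> simp [Set.indicator, h]
          rw [this]
          exact_mod_cast Nat.cast_le.mpr (hC ω)
      _ = C := by simp
  have hsum : (∑ k ∈ s, P (F k)).toReal = ∑ k ∈ s, (P (F k)).toReal :=
    ENNReal.toReal_sum (fun k _ => measure_ne_top P _)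
  calc ∑ k ∈ s, (P (F k)).toReal = (∑ k ∈ s, P (F k)).toReal := hsum.symm
    _ ≤ ((C : ℝ≥0∞)).toReal := ENNReal.toReal_mono (by simp) key
    _ = C := by simp

open Classical in
lemma core_bound {Ω : Type*} [MeasurableSpace Ω] (P : Measure Ω) [IsProbabilityMeasure P]
    {m : ℕ} (hm2 : 2 ≤ m) (S : Ω → Fin m → ℝ) (hS : Measurable S)
    (r' τ : ℕ) (hr1 : 1 ≤ r') (hrN : r' ≤ m - 1) (hτm : τ ≤ m - 1)
    (lastF : Fin m) (hlast : (lastF : ℕ) = m - 1) :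
    1 - ((m + τ - r' : ℕ) : ℝ) / m
      - (∑ k ∈ Finset.Icc 1 m, dTV P (fun ω => delta0 m k τ (S ω)) (fun ω => delta1 m k τ (S ω))) / m
      ≤ (P {ω | (univ.filter fun j => S ω j < S ω lastF).card < r'}).toReal := by
  have hmτ1 : 1 ≤ m - τ := by omega
  set cnt : (Fin m → ℝ) → ℕ := fun w => (univ.filter fun j => w j < w lastF).card with hcnt
  have hcntmeas : Measurable cnt := measurable_countLT lastF
  set F : Set Ω := S ⁻¹' {w | r' ≤ cnt w} with hF
  have hFmeas : MeasurableSet F := hS (hcntmeas (by trivial))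
  set lastτ : Fin (m - τ) := ⟨m - τ - 1, by omega⟩ with hlastτ
  set cnt' : (Fin (m - τ) → ℝ) → ℕ := fun w' => (univ.filter fun i => w' i < w' lastτ).card with hcnt'
  have hcnt'meas : Measurable cnt' := measurable_countLT lastτ
  set Eset : Set (Fin (m - τ) → ℝ) := {w' | r' ≤ cnt' w' + τ} with hEset
  have hEmeas : MeasurableSet Eset := by
    have hEpre : Eset = cnt' ⁻¹' {c | r' ≤ c + τ} := rfl
    rw [hEpre]; exact hcnt'meas (by trivial)
  -- measurability of the delta maps
  have hU : ∀ k, Measurable fun ω => delta0 m k τ (S ω) := by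
    intro k
    apply measurable_pi_lambda
    intro i
    have : (fun ω => delta0 m k τ (S ω) i) = fun ω => S ω (phi0 m k τ i) := by
      funext ω; exact delta0_eq m k τ (S ω) i
    rw [this]; exact (measurable_pi_apply _).comp hS
  have hV : ∀ k, Measurable fun ω => delta1 m k τ (S ω) := by
    intro k
    apply measurable_pi_lambda
    intro i
    have : (fun ω => delta1 m k τ (S ω) i) = fun ω => S ω (phi1 m k τ i) := by
      funext ω; exact delta1_eq m k τ (S ω) i
    rw [this]; exact (measurable_pi_apply _).comp hS
  -- F ⊆ U_k ⁻¹' Eset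
  have hsub0 : ∀ k ∈ Finset.Icc 1 m, F ⊆ (fun ω => delta0 m k τ (S ω)) ⁻¹' Eset := by
    intro k hk ω hω
    rw [Finset.mem_Icc] at hk
    have hωF : r' ≤ cnt (S ω) := hω
    have hfc : (univ.filter fun i : Fin (m - τ) =>
        delta0 m k τ (S ω) i < delta0 m k τ (S ω) lastτ) =
        (univ.filter fun i : Fin (m - τ) => S ω (phi0 m k τ i) < S ω lastF) := by
      apply Finset.filter_congr
      intro i _
      have h1 : phi0 m k τ lastτ = lastF :=
        Fin.ext (by rw [phi0_last m k τ hk.1 (by omega)]; omega)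
      rw [delta0_eq, delta0_eq, h1]
    have hle : cnt (S ω) ≤ cnt' (delta0 m k τ (S ω)) + τ := by
      have := card_filter_le_comp_add (M := m - τ) (m := m) (by omega) (phi0 m k τ)
        (phi0_inj m k τ) (fun j => S ω j < S ω lastF)
      have hmm : m - (m - τ) = τ := by omega
      rw [hmm] at this
      show cnt (S ω) ≤ (univ.filter fun i => delta0 m k τ (S ω) i < delta0 m k τ (S ω) lastτ).card + τ
      rw [hfc]
      exact this
    exact le_trans hωF hle
  -- pointwise counting bound for the delta1 events
  have hdet : ∀ ω, ((Finset.Icc 1 m).filter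
      (fun k => ω ∈ (fun ω' => delta1 m k τ (S ω')) ⁻¹' Eset)).card + r' ≤ m + τ := by
    intro ω
    set w := S ω with hw
    set A : Finset (Fin m) := univ.filter
      (fun j => r' - τ ≤ (univ.filter fun j' => w j' < w j).card) with hA
    have hrank : A.card + (r' - τ) ≤ m := rank_count w (r' - τ) (by omega)
    have hmap : ((Finset.Icc 1 m).filter
        (fun k => ω ∈ (fun ω' => delta1 m k τ (S ω')) ⁻¹' Eset)).card ≤ A.card := by
      apply Finset.card_le_card_of_injOn (fun k => (⟨(k - 1) % m, Nat.mod_lt _ (by omega)⟩ : Fin m))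
      · intro k hk
        rw [Finset.mem_coe, Finset.mem_filter, Finset.mem_Icc] at hk
        obtain ⟨⟨hk1, hkm⟩, hkE⟩ := hk
        have hkE' : r' ≤ cnt' (delta1 m k τ w) + τ := hkE
        have hmod : (k - 1) % m = k - 1 := Nat.mod_eq_of_lt (by omega)
        have hfc : (univ.filter fun i : Fin (m - τ) =>
            delta1 m k τ w i < delta1 m k τ w lastτ) =
            (univ.filter fun i : Fin (m - τ) =>
              w (phi1 m k τ i) < w ⟨(k - 1) % m, Nat.mod_lt _ (by omega)⟩) := by
          apply Finset.filter_congr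
          intro i _
          have h1 : phi1 m k τ lastτ = ⟨(k - 1) % m, Nat.mod_lt _ (by omega)⟩ :=
            Fin.ext (by rw [phi1_last m k τ hk1 hkm (by omega)]; simp [hmod])
          rw [delta1_eq, delta1_eq, h1]
        have hle : cnt' (delta1 m k τ w) ≤
            (univ.filter fun j' => w j' < w ⟨(k - 1) % m, Nat.mod_lt _ (by omega)⟩).card := by
          show (univ.filter fun i => delta1 m k τ w i < delta1 m k τ w lastτ).card ≤ _
          rw [hfc]
          exact card_filter_comp_le (phi1 m k τ) (phi1_inj m k τ hk1 hkm (by omega))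
            (fun j' => w j' < w ⟨(k - 1) % m, Nat.mod_lt _ (by omega)⟩)
        rw [hA, Finset.mem_coe, Finset.mem_filter]
        exact ⟨Finset.mem_univ _, by beta_reduce; omega⟩
      · intro k1 hk1 k2 hk2 hkk
        simp only [Finset.coe_filter, Set.mem_setOf_eq, Finset.mem_Icc] at hk1 hk2
        have := congrArg Fin.val hkk
        simp only [Fin.val_mk] at this
        rw [Nat.mod_eq_of_lt (by omega), Nat.mod_eq_of_lt (by omega)] at this
        omega
    omega
  -- sum of delta1-event probabilities
  have hsum1 : ∑ k ∈ Finset.Icc 1 m, (P ((fun ω => delta1 m k τ (S ω)) ⁻¹' Eset)).toReal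
      ≤ ((m + τ - r' : ℕ) : ℝ) := by
    apply sum_prob_le P _ _ (fun k _ => (hV k) hEmeas)
    intro ω
    have := hdet ω
    omega
  -- dTV comparisons
  have hdtv : ∀ k ∈ Finset.Icc 1 m,
      (P ((fun ω => delta0 m k τ (S ω)) ⁻¹' Eset)).toReal ≤
      (P ((fun ω => delta1 m k τ (S ω)) ⁻¹' Eset)).toReal +
        dTV P (fun ω => delta0 m k τ (S ω)) (fun ω => delta1 m k τ (S ω)) :=
    fun k _ => le_add_dTV P _ _ hEmeas
  -- monotonicity F ⊆ U_k event
  have hmono : ∀ k ∈ Finset.Icc 1 m,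
      (P F).toReal ≤ (P ((fun ω => delta0 m k τ (S ω)) ⁻¹' Eset)).toReal := by
    intro k hk
    exact ENNReal.toReal_mono (measure_ne_top _ _) (measure_mono (hsub0 k hk))
  -- main chain
  have hΨ : ∀ k, 0 ≤ dTV P (fun ω => delta0 m k τ (S ω)) (fun ω => delta1 m k τ (S ω)) :=
    fun k => dTV_nonneg _ _ _
  have hchain : (m : ℝ) * (P F).toReal ≤ ((m + τ - r' : ℕ) : ℝ) +
      ∑ k ∈ Finset.Icc 1 m, dTV P (fun ω => delta0 m k τ (S ω)) (fun ω => delta1 m k τ (S ω)) := by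
    have h1 : (m : ℝ) * (P F).toReal = ∑ _k ∈ Finset.Icc 1 m, (P F).toReal := by
      rw [Finset.sum_const, Nat.card_Icc, nsmul_eq_mul]
      norm_num
    rw [h1]
    calc ∑ k ∈ Finset.Icc 1 m, (P F).toReal
        ≤ ∑ k ∈ Finset.Icc 1 m, (P ((fun ω => delta0 m k τ (S ω)) ⁻¹' Eset)).toReal :=
          Finset.sum_le_sum hmono
      _ ≤ ∑ k ∈ Finset.Icc 1 m, ((P ((fun ω => delta1 m k τ (S ω)) ⁻¹' Eset)).toReal +
            dTV P (fun ω => delta0 m k τ (S ω)) (fun ω => delta1 m k τ (S ω))) :=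
          Finset.sum_le_sum hdtv
      _ = (∑ k ∈ Finset.Icc 1 m, (P ((fun ω => delta1 m k τ (S ω)) ⁻¹' Eset)).toReal) +
            ∑ k ∈ Finset.Icc 1 m, dTV P (fun ω => delta0 m k τ (S ω)) (fun ω => delta1 m k τ (S ω)) :=
          Finset.sum_add_distrib
      _ ≤ _ := by
          apply add_le_add_left hsum1
  -- complement
  have hcompl : {ω | (univ.filter fun j => S ω j < S ω lastF).card < r'} = Fᶜ := by
    ext ω
    simp only [hF, Set.mem_compl_iff, Set.mem_preimage, Set.mem_setOf_eq, not_le, hcnt]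
  have hPc : (P Fᶜ).toReal = 1 - (P F).toReal := by
    rw [measure_compl hFmeas (measure_ne_top _ _), measure_univ,
      ENNReal.toReal_sub_of_le prob_le_one ENNReal.one_ne_top]
    simp
  rw [hcompl, hPc]
  have hm0 : (0 : ℝ) < m := by positivity
  have hpf : (P F).toReal ≤ (((m + τ - r' : ℕ) : ℝ) +
      ∑ k ∈ Finset.Icc 1 m, dTV P (fun ω => delta0 m k τ (S ω)) (fun ω => delta1 m k τ (S ω))) / m := by
    rw [le_div_iff₀ hm0]
    linarith [hchain]
  rw [add_div] at hpf
  linarith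



lemma orderStat_le {N : ℕ} (v : Fin N → ℝ) (x : ℝ) (j : ℕ) (hj1 : 1 ≤ j) (hjN : j ≤ N)
    (hcard : (Finset.univ.filter fun i => v i < x).card < j) : x ≤ orderStat v j := by
  by_contra hlt
  push_neg at hlt
  set l := (List.ofFn v).mergeSort (fun x y => x ≤ y) with hl
  have hlen : l.length = N := by simp [hl]
  have hsorted : List.Pairwise (fun a b : ℝ => a ≤ b) l := by
    have := List.pairwise_mergeSort (le := fun a b : ℝ => decide (a ≤ b))
      (by intro a b c hab hbc; simp only [decide_eq_true_eq] at *; exact le_trans hab hbc)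
      (by intro a b; simpa using le_total a b) (List.ofFn v)
    refine List.Pairwise.imp ?_ this
    intro a b h; simpa using h
  -- every element of l.take j is < x
  have hmem : ∀ y ∈ l.take j, y < x := by
    intro y hy
    rw [List.mem_take_iff_getElem] at hy
    obtain ⟨i, hi, rfl⟩ := hy
    have hij : i ≤ j - 1 := by omega
    have : l[i] ≤ l[j-1] := by
      rcases eq_or_lt_of_le hij with h | h
      · subst h; rfl
      · exact List.pairwise_iff_getElem.mp hsorted i (j-1) (by omega) (by omega) h
    calc l[i] ≤ l[j-1] := this
      _ < x := by
        have : l.getD (j-1) 0 = l[j-1] := List.getD_eq_getElem l 0 (by omega)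
        rw [orderStat] at hlt; rw [← this]; exact hlt
  -- hence countP ≥ j
  have hcount : j ≤ l.countP (fun y => decide (y < x)) := by
    have := List.take_append_drop j l
    have hc : l.countP (fun y => decide (y < x)) =
        (l.take j).countP (fun y => decide (y < x)) + (l.drop j).countP (fun y => decide (y < x)) := by
      conv_lhs => rw [← this]
      rw [List.countP_append]
    rw [hc]
    have : (l.take j).countP (fun y => decide (y < x)) = (l.take j).length :=
      List.countP_eq_length.mpr (by intro a ha; simpa using hmem a ha)
    rw [this, List.length_take]
    omega
  -- countP of l = card filter
  have hperm : l.countP (fun y => decide (y < x)) = (List.ofFn v).countP (fun y => decide (y < x)) :=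
    ((List.ofFn v).mergeSort_perm _).countP_eq _
  rw [hperm, List.ofFn_eq_map, List.countP_map] at hcount
  have : (List.finRange N).countP ((fun y => decide (y < x)) ∘ v) =
      (Finset.univ.filter fun i => v i < x).card := by
    rw [List.countP_eq_length_filter]; rfl
  rw [this] at hcount
  omega

open Finset in
/-- Theorem 1: pretrained conformal coverage lower bound, in terms of the averaged switch
coefficients of the score process (stated for each `τ`, equivalent to the `min` over `τ`). -/
theorem stmt11 {Ω α : Type*} [MeasurableSpace Ω] [MeasurableSpace α]
    (P : Measure Ω) [IsProbabilityMeasure P] {n L : ℕ} (hL : L < n)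
    (Z : Ω → Fin (n + 1) → α) (hZ : Measurable Z)
    (s : (Fin (L + 1) → α) → ℝ) (hs : Measurable s)
    (a : ℝ) (ha : 0 < a) (ha1 : a < 1) (τ : ℕ) (hτ : τ ≤ n - L) :
    (P {ω | (s (fun l : Fin (L + 1) => Z ω ⟨n - l.val, by omega⟩) : EReal)
          ≤ Quantile ((1 - a) * (1 + 1 / ((n : ℝ) - L)))
              (fun j : Fin (n - L) =>
                s fun l : Fin (L + 1) =>
                  Z ω ⟨L + j.val - l.val, by have := j.isLt; omega⟩)}).toReal
      ≥ 1 - a - ((τ : ℝ) / ((n : ℝ) - L + 1)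
          + avgSwitchCoef P (fun ω (j : Fin (n - L + 1)) =>
              s fun l : Fin (L + 1) =>
                Z ω ⟨L + j.val - l.val, by have := j.isLt; omega⟩) τ) := by
  classical
  have hN1 : 1 ≤ n - L := by omega
  set W : Ω → Fin (n - L + 1) → ℝ := fun ω (j : Fin (n - L + 1)) =>
    s fun l : Fin (L + 1) => Z ω ⟨L + j.val - l.val, by have := j.isLt; omega⟩ with hW
  have hWmeas : Measurable W := by
    apply measurable_pi_lambda
    intro j
    exact hs.comp (measurable_pi_lambda _ (fun l => (measurable_pi_apply _).comp hZ))
  set b : ℝ := (1 - a) * (1 + 1 / ((n : ℝ) - L)) with hbdef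
  have hnL : ((n : ℝ) - L) = ((n - L : ℕ) : ℝ) := by
    rw [Nat.cast_sub (by omega)]
  set Nr : ℝ := ((n - L : ℕ) : ℝ) with hNr
  have hNrpos : (0 : ℝ) < Nr := by
    rw [hNr]; exact_mod_cast hN1
  have hbpos : 0 < b := by
    rw [hbdef]
    apply mul_pos (by linarith)
    have h1 : 0 < 1 / ((n : ℝ) - L) := by rw [hnL]; positivity
    linarith
  have havgnn : 0 ≤ avgSwitchCoef P W τ := by
    unfold avgSwitchCoef
    apply div_nonneg _ (by positivity)
    exact Finset.sum_nonneg fun k _ => dTV_nonneg _ _ _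
  have hτnn : 0 ≤ (τ : ℝ) / ((n : ℝ) - L + 1) := by
    rw [hnL]; positivity
  rw [ge_iff_le]
  by_cases hb1 : b > 1
  · -- quantile is ⊤, probability is 1
    have hset : {ω | (s (fun l : Fin (L + 1) => Z ω ⟨n - l.val, by omega⟩) : EReal)
          ≤ Quantile b (fun j : Fin (n - L) =>
              s fun l : Fin (L + 1) =>
                Z ω ⟨L + j.val - l.val, by have := j.isLt; omega⟩)} = Set.univ := by
      ext ω
      simp only [Set.mem_setOf_eq, Set.mem_univ, iff_true]
      rw [Quantile, if_pos hb1]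
      exact le_top
    have hone : (P {ω | (s (fun l : Fin (L + 1) => Z ω ⟨n - l.val, by omega⟩) : EReal)
          ≤ Quantile b (fun j : Fin (n - L) =>
              s fun l : Fin (L + 1) =>
                Z ω ⟨L + j.val - l.val, by have := j.isLt; omega⟩)}).toReal = 1 := by
      rw [hset, measure_univ, ENNReal.toReal_one]
    refine le_trans ?_ (le_of_eq hone.symm)
    linarith
  · -- main case
    have hble : b ≤ 1 := not_lt.mp hb1
    set r' : ℕ := ⌈b * Nr⌉.toNat with hr'
    have hceil_pos : 0 < ⌈b * Nr⌉ := Int.ceil_pos.mpr (by positivity)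
    have hr1 : 1 ≤ r' := by
      rw [hr']
      omega
    have hrN : r' ≤ n - L := by
      have h : ⌈b * Nr⌉ ≤ ((n - L : ℕ) : ℤ) := by
        apply Int.ceil_le.mpr
        push_cast
        rw [← hNr]
        nlinarith
      rw [hr']
      exact_mod_cast Int.toNat_le.mpr h
    have hr_ge : (1 - a) * (Nr + 1) ≤ (r' : ℝ) := by
      have h1 : b * Nr ≤ (⌈b * Nr⌉ : ℝ) := Int.le_ceil _
      have h2 : ((r' : ℕ) : ℝ) = ((⌈b * Nr⌉ : ℤ) : ℝ) := by
        have := Int.toNat_of_nonneg hceil_pos.le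
        rw [hr']
        exact_mod_cast congrArg (fun z : ℤ => (z : ℝ)) this
      have hbN : b * Nr = (1 - a) * (Nr + 1) := by
        rw [hbdef, hnL]
        field_simp
      have h3 : (1 - a) * (Nr + 1) ≤ ((⌈b * Nr⌉ : ℤ) : ℝ) := by
        rw [← hbN]; exact h1
      linarith
    -- apply the core bound
    have hm2 : 2 ≤ n - L + 1 := by omega
    have hcore := core_bound P hm2 W hWmeas r' τ hr1 (by omega) (by omega)
      ⟨n - L, by omega⟩ (by simp)
    -- the coverage set contains the low-rank set
    have hsubset : {ω | (univ.filter fun j => W ω j < W ω ⟨n - L, by omega⟩).card < r'} ⊆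
        {ω | (s (fun l : Fin (L + 1) => Z ω ⟨n - l.val, by omega⟩) : EReal)
          ≤ Quantile b (fun j : Fin (n - L) =>
              s fun l : Fin (L + 1) =>
                Z ω ⟨L + j.val - l.val, by have := j.isLt; omega⟩)} := by
      intro ω hω
      simp only [Set.mem_setOf_eq] at hω ⊢
      have hxe : (s fun l : Fin (L + 1) => Z ω ⟨n - l.val, by omega⟩) =
          W ω ⟨n - L, by omega⟩ := by
        apply congrArg
        funext l
        apply congrArg
        apply Fin.ext
        simp only [Fin.val_mk]
        omega
      have hcount : (univ.filter fun i : Fin (n - L) =>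
          (s fun l : Fin (L + 1) => Z ω ⟨L + i.val - l.val, by have := i.isLt; omega⟩) <
            (s fun l : Fin (L + 1) => Z ω ⟨n - l.val, by omega⟩)).card < r' := by
      -- count over Fin (n-L) ≤ count over Fin (n-L+1)
        have hfc : (univ.filter fun i : Fin (n - L) =>
            (s fun l : Fin (L + 1) => Z ω ⟨L + i.val - l.val, by have := i.isLt; omega⟩) <
              (s fun l : Fin (L + 1) => Z ω ⟨n - l.val, by omega⟩)) =
            (univ.filter fun i : Fin (n - L) =>
              W ω ⟨i.val, by have := i.isLt; omega⟩ < W ω ⟨n - L, by omega⟩) := by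
          apply Finset.filter_congr
          intro i _
          rw [hxe]
        have hinj : Function.Injective
            (fun i : Fin (n - L) => (⟨i.val, by have := i.isLt; omega⟩ : Fin (n - L + 1))) :=
          fun i1 i2 h => Fin.ext (by simpa using congrArg Fin.val h)
        have := card_filter_comp_le
          (fun i : Fin (n - L) => (⟨i.val, by have := i.isLt; omega⟩ : Fin (n - L + 1)))
          hinj (fun j => W ω j < W ω ⟨n - L, by omega⟩)
        rw [hfc]
        calc (univ.filter fun i : Fin (n - L) =>
            W ω ⟨i.val, by have := i.isLt; omega⟩ < W ω ⟨n - L, by omega⟩).card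
            ≤ (univ.filter fun j : Fin (n - L + 1) => W ω j < W ω ⟨n - L, by omega⟩).card := this
          _ < r' := hω
      have hord : (s fun l : Fin (L + 1) => Z ω ⟨n - l.val, by omega⟩) ≤
          orderStat (fun j : Fin (n - L) =>
            s fun l : Fin (L + 1) => Z ω ⟨L + j.val - l.val, by have := j.isLt; omega⟩) r' :=
        orderStat_le _ _ r' hr1 hrN hcount
      rw [Quantile, if_neg hb1, if_neg (not_le.mpr hbpos)]
      exact_mod_cast hord
    -- combine
    have hmono : (P {ω | (univ.filter fun j => W ω j < W ω ⟨n - L, by omega⟩).card < r'}).toReal ≤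
        (P {ω | (s (fun l : Fin (L + 1) => Z ω ⟨n - l.val, by omega⟩) : EReal)
          ≤ Quantile b (fun j : Fin (n - L) =>
              s fun l : Fin (L + 1) =>
                Z ω ⟨L + j.val - l.val, by have := j.isLt; omega⟩)}).toReal :=
      ENNReal.toReal_mono (measure_ne_top _ _) (measure_mono hsubset)
    refine le_trans ?_ hmono
    refine le_trans ?_ hcore
    · -- arithmetic
      have hm' : ((n : ℝ) - L + 1) = ((n - L + 1 : ℕ) : ℝ) := by push_cast [hnL]; ring
      have hm'pos : (0 : ℝ) < ((n - L + 1 : ℕ) : ℝ) := by positivity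
      have hC : ((n - L + 1 + τ - r' : ℕ) : ℝ) = ((n - L + 1 : ℕ) : ℝ) + τ - r' := by
        rw [Nat.cast_sub (by omega)]
        push_cast
        ring
      have hNr1 : Nr + 1 = ((n - L + 1 : ℕ) : ℝ) := by rw [hNr]; push_cast; ring
      have hkey : ((n - L + 1 + τ - r' : ℕ) : ℝ) / ((n - L + 1 : ℕ) : ℝ) ≤
          a + (τ : ℝ) / ((n : ℝ) - L + 1) := by
        rw [hm', hC, div_le_iff₀ hm'pos]
        have hexp : (a + (τ : ℝ) / ((n - L + 1 : ℕ) : ℝ)) * ((n - L + 1 : ℕ) : ℝ) =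
            a * ((n - L + 1 : ℕ) : ℝ) + τ := by
          field_simp
        rw [hexp]
        rw [hNr1] at hr_ge
        nlinarith
      have havg : avgSwitchCoef P W τ =
          (∑ k ∈ Finset.Icc 1 (n - L + 1),
            dTV P (fun ω => delta0 (n - L + 1) k τ (W ω))
              (fun ω => delta1 (n - L + 1) k τ (W ω))) / ((n - L + 1 : ℕ) : ℝ) := rfl
      rw [havg]
      linarith
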